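/- (Theorem 1, part (c).) Fix an integer n ≥ 1, σ > 0, α, τ ∈ (0,1) satisfying (C1) τ ≥ α and (C2) τ < 2Φ(−z_{α/2}/2) − α, and λ > 0 with z_{α/2}σ/√n < √λ < (z_{α/2} + z_{τ/2})σ/√n. Set ν_0 = √λ. Then for every θ ∈ [ν_0, ∞), the difference Δ(θ) = CR(θ) − CR_1(θ) satisfies Δ(θ) > −α/2; that is, either Δ(θ) ≥ 0 or −α/2 < Δ(θ) < 0. -/

import Mathlib

set_option maxHeartbeats 2000000


open MeasureTheory ProbabilityTheory

/-- The standard normal cumulative distribution function. -/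
noncomputable def Phi (x : ℝ) : ℝ := (gaussianReal 0 1 (Set.Iic x)).toReal

section PhiAux
open Real
noncomputable def phiPDF (x : ℝ) : ℝ := gaussianPDFReal 0 1 x

lemma phiPDF_pos (x : ℝ) : 0 < phiPDF x := gaussianPDFReal_pos 0 1 x one_ne_zero

lemma phiPDF_cont : Continuous phiPDF := by
  unfold phiPDF
  rw [gaussianPDFReal_def]
  fun_prop

lemma phiPDF_integrable : Integrable phiPDF := integrable_gaussianPDFReal 0 1

lemma Phi_eq_integral (x : ℝ) : Phi x = ∫ t in Set.Iic x, phiPDF t := by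
  unfold Phi phiPDF
  rw [gaussianReal_apply_eq_integral 0 one_ne_zero]
  rw [ENNReal.toReal_ofReal]
  exact setIntegral_nonneg measurableSet_Iic (fun t _ => gaussianPDFReal_nonneg 0 1 t)

lemma Phi_sub_eq (x y : ℝ) : Phi y - Phi x = ∫ t in x..y, phiPDF t := by
  rw [Phi_eq_integral, Phi_eq_integral]
  have h1 : IntegrableOn phiPDF (Set.Iic x) volume := phiPDF_integrable.integrableOn
  have h2 : IntegrableOn phiPDF (Set.Iic y) volume := phiPDF_integrable.integrableOn
  have h := intervalIntegral.integral_Iic_sub_Iic h1 h2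
  rw [← h]

lemma Phi_strictMono : StrictMono Phi := by
  intro x y hxy
  have h : 0 < ∫ t in x..y, phiPDF t :=
    intervalIntegral.intervalIntegral_pos_of_pos (f := phiPDF)
      (phiPDF_integrable.intervalIntegrable) (fun t => phiPDF_pos t) hxy
  have := Phi_sub_eq x y
  linarith

lemma Phi_mono : Monotone Phi := Phi_strictMono.monotone

lemma Phi_nonneg (x : ℝ) : 0 ≤ Phi x := ENNReal.toReal_nonneg

lemma Phi_le_one (x : ℝ) : Phi x ≤ 1 := by
  unfold Phi
  rw [← ENNReal.toReal_one]
  exact ENNReal.toReal_mono (by simp) (by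
    simpa using measure_mono (μ := gaussianReal 0 1) (Set.subset_univ (Set.Iic x)))

lemma Phi_pos (x : ℝ) : 0 < Phi x := by
  have h : 0 < ∫ t in (x-1)..x, phiPDF t :=
    intervalIntegral.intervalIntegral_pos_of_pos (f := phiPDF)
      (phiPDF_integrable.intervalIntegrable) (fun t => phiPDF_pos t) (by linarith)
  have h2 := Phi_sub_eq (x-1) x
  have := Phi_nonneg (x-1)
  linarith

lemma Phi_neg (x : ℝ) : Phi (-x) = 1 - Phi x := by
  have hmap : (gaussianReal 0 1).map (fun y => -y) = gaussianReal 0 1 := by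
    have := gaussianReal_map_const_mul (μ := 0) (v := 1) (-1)
    simpa using this
  have h1 : Phi (-x) = ((gaussianReal 0 1).map (fun y : ℝ => -y) (Set.Iic (-x))).toReal := by
    rw [hmap]; rfl
  have h2 : (gaussianReal 0 1).map (fun y : ℝ => -y) (Set.Iic (-x))
      = gaussianReal 0 1 (Set.Ici x) := by
    rw [Measure.map_apply (by fun_prop) measurableSet_Iic]
    congr 1
    ext y
    simp [neg_le_neg_iff, le_neg]
  have h3 : gaussianReal 0 1 (Set.Ici x) = 1 - gaussianReal 0 1 (Set.Iio x) := by
    have hc := measure_compl (μ := gaussianReal 0 1) (s := Set.Iio x) measurableSet_Iio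
      (measure_ne_top _ _)
    rw [Set.compl_Iio] at hc
    rw [hc, measure_univ]
  have h4 : gaussianReal 0 1 (Set.Iio x) = gaussianReal 0 1 (Set.Iic x) := by
    rw [← Set.Iic_diff_right, measure_diff_null]
    have : gaussianReal 0 1 {x} = 0 :=
      (gaussianReal_absolutelyContinuous 0 one_ne_zero) (volume_singleton)
    exact this
  have hle : gaussianReal 0 1 (Set.Iic x) ≤ 1 := by
    simpa using measure_mono (μ := gaussianReal 0 1) (Set.subset_univ (Set.Iic x))
  rw [h1, h2, h3, h4]
  rw [ENNReal.toReal_sub_of_le hle (by simp)]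
  simp [Phi]

lemma Phi_zero : Phi 0 = 1/2 := by
  have := Phi_neg 0
  simp at this
  linarith


lemma phiPDF_even (x : ℝ) : phiPDF (-x) = phiPDF x := by
  unfold phiPDF gaussianPDFReal
  norm_num

lemma phiPDF_eq (x : ℝ) : phiPDF x = (Real.sqrt (2 * Real.pi))⁻¹ * Real.exp (-x^2/2) := by
  unfold phiPDF gaussianPDFReal
  norm_num

lemma phiPDF_shift (c d : ℝ) : phiPDF (c + d) = Real.exp (-(d*c) - d^2/2) * phiPDF c := by
  rw [phiPDF_eq, phiPDF_eq,
    show Real.exp (-(d*c) - d^2/2) * ((Real.sqrt (2 * Real.pi))⁻¹ * Real.exp (-c^2/2))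
      = (Real.sqrt (2 * Real.pi))⁻¹ * (Real.exp (-(d*c) - d^2/2) * Real.exp (-c^2/2)) from by
        ring, ← Real.exp_add]
  congr 1
  ring

lemma phiPDF_comp_sub_integrable (d : ℝ) : Integrable (fun t => phiPDF (t - d)) := by
  have : (fun t => phiPDF (t - d)) = gaussianPDFReal d 1 := by
    funext t
    unfold phiPDF gaussianPDFReal
    norm_num
  rw [this]
  exact integrable_gaussianPDFReal d 1

/-- Lemma T: Gaussian tail shift bound. -/
lemma Phi_tail_shift {c d : ℝ} (hc : 0 ≤ c) (hd : 0 ≤ d) :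
    Phi (-(c+d)) ≤ Real.exp (-(d*c) - d^2/2) * Phi (-c) := by
  rw [Phi_eq_integral, Phi_eq_integral]
  have hsub : (∫ t in Set.Iic (-(c+d)), phiPDF t) = ∫ t in Set.Iic (-c), phiPDF (t - d) := by
    rw [← integral_indicator measurableSet_Iic, ← integral_indicator measurableSet_Iic]
    rw [← integral_sub_right_eq_self (fun t => (Set.Iic (-(c+d))).indicator phiPDF t) d]
    congr 1
    funext t
    simp only [Set.indicator_apply, Set.mem_Iic]
    by_cases h : t ≤ -c
    · rw [if_pos (by linarith), if_pos h]
    · rw [if_neg (by push_neg at h ⊢; linarith), if_neg h]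
  rw [hsub, ← MeasureTheory.integral_const_mul]
  apply setIntegral_mono_on
  · exact (phiPDF_comp_sub_integrable d).integrableOn
  · exact (phiPDF_integrable.const_mul (Real.exp (-(d*c) - d^2/2))).integrableOn
  · exact measurableSet_Iic
  · intro t ht
    simp only [Set.mem_Iic] at ht
    rw [phiPDF_eq, phiPDF_eq,
      show Real.exp (-(d*c) - d^2/2) * ((Real.sqrt (2 * Real.pi))⁻¹ * Real.exp (-t^2/2))
        = (Real.sqrt (2 * Real.pi))⁻¹ * (Real.exp ((-(d*c) - d^2/2) + -t^2/2)) from by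
          rw [Real.exp_add]; ring]
    have h1 : (0:ℝ) ≤ (Real.sqrt (2 * Real.pi))⁻¹ := by positivity
    apply mul_le_mul_of_nonneg_left _ h1
    apply Real.exp_le_exp.2
    have hdtc : d * (t + c) ≤ 0 := mul_nonpos_of_nonneg_of_nonpos hd (by linarith)
    nlinarith

lemma Phi_hasDerivAt (x : ℝ) : HasDerivAt Phi (phiPDF x) x := by
  have heq : Phi = fun y => Phi 0 + ∫ t in (0:ℝ)..y, phiPDF t := by
    funext y
    have := Phi_sub_eq 0 y
    linarith
  rw [heq]
  apply HasDerivAt.const_add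
  apply intervalIntegral.integral_hasDerivAt_right
  · exact phiPDF_integrable.intervalIntegrable
  · exact phiPDF_cont.stronglyMeasurable.stronglyMeasurableAtFilter
  · exact phiPDF_cont.continuousAt

lemma Phi_continuous : Continuous Phi :=
  continuous_iff_continuousAt.2 fun x => (Phi_hasDerivAt x).continuousAt

lemma Phi_ratio_anti {d : ℝ} (hd : 0 ≤ d) :
    AntitoneOn (fun c => Phi (-(c+d)) / Phi (-c)) (Set.Ici 0) := by
  have hden : ∀ c : ℝ, HasDerivAt (fun c => Phi (-c)) (-phiPDF (-c)) c := by
    intro c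
    have h1 := (Phi_hasDerivAt (-c)).comp c (hasDerivAt_neg c)
    simpa [Function.comp_def] using h1
  have hnum : ∀ c : ℝ, HasDerivAt (fun c => Phi (-(c+d))) (-phiPDF (-(c+d))) c := by
    intro c
    have inner : HasDerivAt (fun c : ℝ => -(c+d)) (-1) c := by
      exact ((hasDerivAt_id c).add_const d).neg
    have h1 := (Phi_hasDerivAt (-(c+d))).comp c inner
    simpa [Function.comp_def] using h1
  have hg : ∀ c : ℝ, HasDerivAt (fun c => Phi (-(c+d)) / Phi (-c))
      ((-phiPDF (-(c+d)) * Phi (-c) - Phi (-(c+d)) * -phiPDF (-c)) / (Phi (-c))^2) c := by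
    intro c
    exact (hnum c).div (hden c) (ne_of_gt (Phi_pos _))
  apply antitoneOn_of_deriv_nonpos (convex_Ici 0)
  · apply Continuous.continuousOn
    exact (Phi_continuous.comp (by fun_prop)).div
      (Phi_continuous.comp (by fun_prop)) (fun c => ne_of_gt (Phi_pos _))
  · intro c _
    exact (hg c).differentiableAt.differentiableWithinAt
  · intro c hc
    rw [interior_Ici] at hc
    rw [(hg c).deriv]
    apply div_nonpos_of_nonpos_of_nonneg _ (sq_nonneg _)
    have hkey : Phi (-(c+d)) * phiPDF (-c) ≤ phiPDF (-(c+d)) * Phi (-c) := by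
      rw [phiPDF_even, phiPDF_even]
      have hT := Phi_tail_shift (le_of_lt hc) hd
      have hshift : phiPDF (c+d) = Real.exp (-(d*c) - d^2/2) * phiPDF c := phiPDF_shift c d
      have hp : 0 < phiPDF c := phiPDF_pos c
      calc Phi (-(c+d)) * phiPDF c ≤ (Real.exp (-(d*c) - d^2/2) * Phi (-c)) * phiPDF c :=
            mul_le_mul_of_nonneg_right hT (le_of_lt hp)
        _ = phiPDF (c+d) * Phi (-c) := by rw [hshift]; ring
    nlinarith
  
lemma Phi_K {a : ℝ} (ha : 0 < a) (hC2' : 2 * Phi (-a) < Phi (-(a/2))) :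
    Phi (-(3*a/2)) < Phi (-a) / 2 := by
  have h1 := Phi_ratio_anti (d := a/2) (by linarith)
    (Set.mem_Ici.2 (by linarith : (0:ℝ) ≤ a/2)) (Set.mem_Ici.2 (le_of_lt ha)) (by linarith)
  simp only at h1
  rw [show a/2 + a/2 = a by ring, show a + a/2 = 3*a/2 by ring] at h1
  have hpa := Phi_pos (-a)
  have hpa2 := Phi_pos (-(a/2))
  have h2 : Phi (-a) / Phi (-(a/2)) < 1/2 := by
    rw [div_lt_iff₀ hpa2]
    linarith
  have h3 : Phi (-(3*a/2)) / Phi (-a) < 1/2 := lt_of_le_of_lt h1 h2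
  rw [div_lt_iff₀ hpa] at h3
  linarith

end PhiAux

/-- P_s(θ,ν) = Φ(√n(θ − ν)/σ) + Φ(√n(−θ − ν)/σ). -/
noncomputable def Ps (n : ℕ) (σ θ ν : ℝ) : ℝ :=
  Phi (Real.sqrt n * (θ - ν) / σ) + Phi (Real.sqrt n * (-θ - ν) / σ)

/-- σ̃(θ) = (1 + λ/θ²)⁻¹ σ for θ ≠ 0, with the convention σ̃(0) = 0. -/
noncomputable def sigTilde (lam σ θ : ℝ) : ℝ :=
  if θ = 0 then 0 else (1 + lam / θ ^ 2)⁻¹ * σ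

open Classical in
/-- The piecewise function CR_a(θ,ν); here `za` denotes the quantile z_{α/2}. -/
noncomputable def CRa (n : ℕ) (σ lam za θ ν : ℝ) : ℝ :=
  if θ < |ν - za * sigTilde lam σ θ / Real.sqrt n| then
    (Ps n σ θ ν - 2 * Phi (-(za * sigTilde lam σ θ / σ))) *
      (if ν < za * sigTilde lam σ θ / Real.sqrt n then 1 else 0)
  else if θ ≤ ν + za * sigTilde lam σ θ / Real.sqrt n then
    Phi (za * sigTilde lam σ θ / σ) - Phi (Real.sqrt n * (ν - θ) / σ)
  else 1 - 2 * Phi (-(za * sigTilde lam σ θ / σ))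

open Classical in
/-- The piecewise function CR_b(θ,ν); here `za` denotes the quantile z_{α/2}. -/
noncomputable def CRb (n : ℕ) (σ α za θ ν : ℝ) : ℝ :=
  if θ < |ν - za * σ / Real.sqrt n| then
    (Ps n σ θ ν - α) * (if ν < za * σ / Real.sqrt n then 1 else 0)
  else if θ ≤ ν + za * σ / Real.sqrt n then
    1 - α / 2 - Phi (Real.sqrt n * (ν - θ) / σ)
  else 1 - α

/-- CR₁(θ) = CR_a(θ, ν₀)/P_s(θ, ν₀) with ν₀ = √λ: the conditional coverage
probability of the asymptotic-based confidence interval. -/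
noncomputable def CR1 (n : ℕ) (σ lam za θ : ℝ) : ℝ :=
  CRa n σ lam za θ (Real.sqrt lam) / Ps n σ θ (Real.sqrt lam)

/-- CR(θ) = (CR_b(θ,ν₁) + CR_a(θ,ν₂) − CR_b(θ,ν₂))/P_s(θ,ν₁) with
ν₁ = z_{τ/2}σ/√n and ν₂ = √λ + z_{α/2}σ/√n: the conditional coverage probability
of the two-step confidence interval. Here `za` = z_{α/2} and `zt` = z_{τ/2}. -/
noncomputable def CRtwo (n : ℕ) (σ lam α za zt θ : ℝ) : ℝ :=
  (CRb n σ α za θ (zt * σ / Real.sqrt n)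
    + CRa n σ lam za θ (Real.sqrt lam + za * σ / Real.sqrt n)
    - CRb n σ α za θ (Real.sqrt lam + za * σ / Real.sqrt n))
  / Ps n σ θ (zt * σ / Real.sqrt n)

/-- Δ(θ) = CR(θ) − CR₁(θ). -/
noncomputable def Delta (n : ℕ) (σ lam α za zt θ : ℝ) : ℝ :=
  CRtwo n σ lam α za zt θ - CR1 n σ lam za θ

/-- Region R1/R3 algebra -/
lemma regR1 {A q Ft w wp Pta D0 : ℝ}
    (hA : 0 < A) (hq : 0 < q) (hFt : 0 < Ft) (hFtw : Ft ≤ w)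
    (hPta : 0 ≤ Pta) (hPtaq : Pta ≤ q) (hqFt : q ≤ Ft)
    (hwp : 0 ≤ wp) (hwpA : wp < A * w) (hD0 : Ft ≤ D0) :
    -A < (w - Pta) / (w + wp) - (Ft - q) / D0 := by
  have hw : 0 < w := lt_of_lt_of_le hFt hFtw
  have hD0' : 0 < D0 := lt_of_lt_of_le hFt hD0
  have h1 : (Ft - q) / D0 ≤ (Ft - q) / Ft :=
    div_le_div_of_nonneg_left (by linarith) hFt hD0
  have hid : (Ft - q) / Ft = 1 - q / Ft := by field_simp
  have e1 : Pta / w ≤ q / Ft := div_le_div₀ (le_of_lt hq) hPtaq hFt hFtw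
  have e2 : (w - Pta) / (w + wp) - (1 - Pta / w - wp / w) = wp * (Pta + wp) / (w * (w + wp)) := by
    field_simp
    ring
  have e3 : 0 ≤ wp * (Pta + wp) / (w * (w + wp)) := by positivity
  have e5 : wp / w < A := (div_lt_iff₀ hw).2 (by linarith [hwpA])
  linarith

/-- Region R4 algebra -/
lemma regR4 {A q Ft w wp D0 : ℝ}
    (hA : 0 < A) (hq : 0 < q) (hq2 : 2 * q ≤ 1) (hq1 : q < 1)
    (hFt : 1 - q ≤ Ft) (hFtw : Ft ≤ w)
    (hwp : 0 ≤ wp) (hwpA : wp < A * w) (hD0 : Ft ≤ D0) :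
    -A < (w - q) / (w + wp) - (1 - 2*q) / D0 := by
  have hq1' : 0 < 1 - q := by linarith
  have hFt0 : 0 < Ft := by linarith
  have hw : 0 < w := lt_of_lt_of_le hFt0 hFtw
  have hD0' : 0 < D0 := lt_of_lt_of_le hFt0 hD0
  have s1 : (w - q) / (w + wp) - (1 - q / w - wp / w) = wp * (q + wp) / (w * (w + wp)) := by
    field_simp
    ring
  have s1' : 0 ≤ wp * (q + wp) / (w * (w + wp)) := by positivity
  have s2 : q / w ≤ q / (1 - q) :=
    div_le_div_of_nonneg_left (le_of_lt hq) hq1' (by linarith)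
  have s3 : (1 - 2*q) / D0 ≤ (1 - 2*q) / (1 - q) :=
    div_le_div_of_nonneg_left (by linarith) hq1' (by linarith)
  have s4 : q / (1 - q) + (1 - 2*q) / (1 - q) = 1 := by
    field_simp
    ring
  have s5 : wp / w < A := (div_lt_iff₀ hw).2 (by linarith [hwpA])
  linarith

/-- Region (i) algebra -/
lemma regI {A q N D1 CR1v : ℝ}
    (hA : 0 < A) (hA2 : A < 1/2) (hq : 0 < q) (hq2 : 2*q < 1)
    (hN : 1 - A - q ≤ N) (hD1a : 0 < D1) (hD1b : D1 ≤ 1)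
    (hCR1 : CR1v ≤ (1 - 2*q) / (1 - q)) :
    -A < N / D1 - CR1v := by
  have hq1' : 0 < 1 - q := by linarith
  have hN0 : 0 < N := by linarith
  have h1 : N ≤ N / D1 := by
    rw [le_div_iff₀ hD1a]
    nlinarith
  have h2 : (1 - q) - (1 - 2*q) / (1 - q) = q^2 / (1 - q) := by
    field_simp
    ring
  have h3 : 0 < q^2 / (1 - q) := by positivity
  linarith

/-- CR1 bound, branch 2 -/
lemma CR1boundB2 {q Ft D0 : ℝ} (hq : 0 < q) (hqFt : q ≤ Ft) (hFtub : Ft ≤ 1 - q)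
    (hD0 : Ft ≤ D0) : (Ft - q) / D0 ≤ (1 - 2*q) / (1 - q) := by
  have hFt0 : 0 < Ft := by linarith
  have hD0' : 0 < D0 := by linarith
  have h1 : (Ft - q) / D0 ≤ (Ft - q) / Ft := div_le_div_of_nonneg_left (by linarith) hFt0 hD0
  have h2 : (Ft - q) / Ft ≤ (1 - 2*q) / (1 - q) := by
    rw [div_le_div_iff₀ hFt0 (by linarith)]
    nlinarith
  linarith

/-- CR1 bound, branch 3 -/
lemma CR1boundB3 {q Ft D0 : ℝ} (hq2 : 2*q ≤ 1) (hq1 : q < 1) (hFt : 1 - q ≤ Ft)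
    (hD0 : Ft ≤ D0) : (1 - 2*q) / D0 ≤ (1 - 2*q) / (1 - q) :=
  div_le_div_of_nonneg_left (by linarith) (by linarith) (by linarith)

/-- Regions C and D algebra -/
lemma regCD {A q Pat D1 D0 Ft : ℝ}
    (hA : 0 < A) (hA2 : A < 1/2) (hAq : A ≤ q) (hq2 : 2*q < 1)
    (hPat : A ≤ Pat) (hFt : 1 - A ≤ Ft) (hD0 : Ft ≤ D0)
    (hD1a : 0 < D1) (hD1b : D1 ≤ 1) :
    -A < (1 - A - 2*q + Pat) / D1 - (1 - 2*q) / D0 := by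
  have hFt0 : 0 < Ft := by linarith
  have hD0' : 0 < D0 := by linarith
  have hnum : 0 < 1 - A - 2*q + Pat := by linarith
  have s1 : (1 - A - 2*q + Pat) ≤ (1 - A - 2*q + Pat) / D1 := by
    rw [le_div_iff₀ hD1a]
    nlinarith
  have s2 : (1 - 2*q) / D0 ≤ (1 - 2*q) / (1 - A) := by
    apply div_le_div_of_nonneg_left (by linarith) (by linarith) (by linarith)
  have s3 : (1 - 2*q) / (1 - A) < (1 - 2*q) + A := by
    rw [div_lt_iff₀ (by linarith)]
    nlinarith
  linarith

/-- Theorem 1, part (c): under (C1), (C2) and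
z_{α/2}σ/√n < √λ < (z_{α/2} + z_{τ/2})σ/√n, for every θ ∈ [ν₀, ∞) (ν₀ = √λ) we have
Δ(θ) > −α/2; that is, either Δ(θ) ≥ 0 or −α/2 < Δ(θ) < 0. -/
theorem theorem1_part_c (n : ℕ) (hn : 1 ≤ n) (σ lam α τ za zt : ℝ)
    (hσ : 0 < σ) (hlam : 0 < lam)
    (hα : α ∈ Set.Ioo (0:ℝ) 1) (hτ : τ ∈ Set.Ioo (0:ℝ) 1)
    (hza : Phi (-za) = α / 2) (hzt : Phi (-zt) = τ / 2)
    (hC1 : α ≤ τ) (hC2 : τ < 2 * Phi (-(za / 2)) - α)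
    (hlamLB : za * σ / Real.sqrt n < Real.sqrt lam)
    (hlamUB : Real.sqrt lam < (za + zt) * σ / Real.sqrt n) :
    ∀ θ ∈ Set.Ici (Real.sqrt lam), -(α / 2) < Delta n σ lam α za zt θ := by
  intro θ hθ
  rw [Set.mem_Ici] at hθ
  have hn0 : (0:ℝ) < Real.sqrt n := Real.sqrt_pos.2 (by exact_mod_cast Nat.lt_of_lt_of_le Nat.zero_lt_one hn)
  have hσne : σ ≠ 0 := ne_of_gt hσ
  set s : ℝ := σ / Real.sqrt n with hs_def
  have hs : 0 < s := div_pos hσ hn0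
  have hsne : s ≠ 0 := ne_of_gt hs
  have harg : ∀ E : ℝ, Real.sqrt n * E / σ = E / s := by
    intro E
    rw [hs_def, div_div_eq_mul_div]
    ring
  -- quantile facts
  have hα0 : 0 < α := hα.1
  have hα1 : α < 1 := hα.2
  have hza0 : 0 < za := by
    by_contra h
    push_neg at h
    have h1 := Phi_mono (show (0:ℝ) ≤ -za by linarith)
    rw [Phi_zero] at h1
    rw [hza] at h1
    linarith
  have hzt0 : 0 < zt := by
    by_contra h
    push_neg at h
    have h1 := Phi_mono (show (0:ℝ) ≤ -zt by linarith)
    rw [Phi_zero] at h1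
    rw [hzt] at h1
    linarith [hτ.2]
  have hbza : zt ≤ za := by
    by_contra h
    push_neg at h
    have h1 := Phi_strictMono (show -zt < -za by linarith)
    rw [hza, hzt] at h1
    linarith
  have hC2' : Phi (-zt) + Phi (-za) < Phi (-(za/2)) := by
    rw [hza, hzt]
    linarith
  have hzthalf : za/2 < zt := by
    by_contra h
    push_neg at h
    have h1 := Phi_mono (show -(za/2) ≤ -zt by linarith)
    linarith [Phi_pos (-za)]
  have hKey : Phi (-(3*za/2)) < Phi (-za)/2 := by
    apply Phi_K hza0
    have h1 := Phi_mono (show -za ≤ -zt by linarith)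
    linarith
  -- m facts
  set m := Real.sqrt lam with hm_def
  have hm0 : 0 < m := Real.sqrt_pos.2 hlam
  have hm2 : m^2 = lam := Real.sq_sqrt hlam.le
  have hmLB : za * s < m := by
    rw [hs_def, ← mul_div_assoc]
    exact hlamLB
  have hmUB : m < (za + zt) * s := by
    rw [hs_def, ← mul_div_assoc]
    exact hlamUB
  have hθ0 : 0 < θ := lt_of_lt_of_le hm0 hθ
  -- sigTilde facts
  set K := (1 + lam / θ^2)⁻¹ with hK_def
  have hKden : (1:ℝ) < 1 + lam/θ^2 := by
    have : 0 < lam/θ^2 := by positivity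
    linarith
  have hKpos : 0 < K := by
    rw [hK_def]
    positivity
  have hK1 : K < 1 := by
    rw [hK_def]
    rw [inv_lt_one_iff₀]
    right
    exact hKden
  have hKhalf : 1/2 ≤ K := by
    have hθ2 : lam ≤ θ^2 := by
      rw [← hm2]
      have := mul_le_mul hθ hθ (le_of_lt hm0) (le_of_lt hθ0)
      nlinarith
    have h2 : 1 + lam/θ^2 ≤ 2 := by
      have : lam/θ^2 ≤ 1 := by
        rw [div_le_one (by positivity)]
        exact hθ2
      linarith
    rw [hK_def]
    rw [show (1:ℝ)/2 = (2:ℝ)⁻¹ by norm_num]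
    exact inv_anti₀ (by linarith) h2
  have hsig : sigTilde lam σ θ = K * σ := by
    unfold sigTilde
    rw [if_neg (ne_of_gt hθ0)]
  set rt := za * K with hrt_def
  have hrt0 : 0 < rt := by positivity
  have hrthalf : za/2 ≤ rt := by
    rw [hrt_def]
    nlinarith
  have hrtlt : rt < za := by
    rw [hrt_def]
    nlinarith
  have hrtσ : za * sigTilde lam σ θ / σ = rt := by
    rw [hsig, hrt_def]
    field_simp
  have hcs : za * sigTilde lam σ θ / Real.sqrt n = rt * s := by
    rw [hsig, hrt_def, hs_def]
    field_simp
  have hzts : zt * σ / Real.sqrt n = zt * s := mul_div_assoc _ _ _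
  have hzas : za * σ / Real.sqrt n = za * s := mul_div_assoc _ _ _

  -- q facts
  set q := Phi (-rt) with hq_def
  have hPrt : Phi rt = 1 - q := by
    have h := Phi_neg rt
    rw [← hq_def] at h
    linarith
  have hq0 : 0 < q := Phi_pos _
  have hqA : α/2 ≤ q := by
    rw [← hza]
    exact Phi_mono (by linarith)
  have hqhalf : q < 1/2 := by
    rw [← Phi_zero]
    exact Phi_strictMono (by linarith)
  have hA0 : 0 < α/2 := by linarith
  have hA2 : α/2 < 1/2 := by linarith
  -- product helper facts
  have hzts0 : 0 < zt*s := mul_pos hzt0 hs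
  have hzas0 : 0 < za*s := mul_pos hza0 hs
  have hrts0 : 0 < rt*s := mul_pos hrt0 hs
  have hrtsz : rt*s < za*s := mul_lt_mul_of_pos_right hrtlt hs
  have hrtsh : za/2*s ≤ rt*s := mul_le_mul_of_nonneg_right hrthalf hs.le
  have hztle : zt*s ≤ za*s := mul_le_mul_of_nonneg_right hbza hs.le
  have hzass : za/2*s < zt*s := mul_lt_mul_of_pos_right hzthalf hs
  -- unfold the goal
  simp only [Delta, CRtwo, CR1, Ps]
  rw [← hm_def, hzts, hzas]
  simp only [harg]
  -- atoms
  set w := Phi ((θ - zt*s)/s) with hw_def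
  set wp := Phi ((-θ - zt*s)/s) with hwp_def
  set Ft := Phi ((θ - m)/s) with hFt_def
  set Fmt := Phi ((-θ - m)/s) with hFmt_def
  have hwhalf : 1/2 ≤ w := by
    rw [← Phi_zero, hw_def]
    apply Phi_mono
    apply div_nonneg _ hs.le
    linarith
  have hFtw : Ft ≤ w := by
    rw [hFt_def, hw_def]
    exact Phi_mono ((div_le_div_iff_of_pos_right hs).2 (by linarith))
  have hwp0 : 0 ≤ wp := Phi_nonneg _
  have hwpA : wp < α/2 * w := by
    have h1 : wp < Phi (-(3*za/2)) := by
      rw [hwp_def]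
      apply Phi_strictMono
      rw [div_lt_iff₀ hs]
      linarith
    have hprod : α/2*(1/2) ≤ α/2 * w := mul_le_mul_of_nonneg_left hwhalf (by linarith)
    rw [hza] at hKey
    linarith
  have hD1le : w + wp ≤ 1 := by
    have h1 : wp ≤ Phi ((zt*s - θ)/s) := by
      rw [hwp_def]
      exact Phi_mono ((div_le_div_iff_of_pos_right hs).2 (by linarith))
    rw [show (zt*s - θ)/s = -((θ - zt*s)/s) by ring, Phi_neg, ← hw_def] at h1
    linarith
  have hD1pos : 0 < w + wp := by
    have h1 : 0 < w := by rw [hw_def]; exact Phi_pos _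
    linarith
  have hFt0 : 0 < Ft := by rw [hFt_def]; exact Phi_pos _
  have hFmt0 : 0 ≤ Fmt := by rw [hFmt_def]; exact Phi_nonneg _
  have hqFt : q ≤ Ft := by
    rw [hq_def, hFt_def]
    exact Phi_mono (le_trans (by linarith) (div_nonneg (by linarith) hs.le))
  have hD0ge : Ft ≤ Ft + Fmt := by linarith
  -- branch-condition helpers
  have hF1 : ¬(θ < |m - za * sigTilde lam σ θ / Real.sqrt n|) := by
    rw [not_lt, hcs, abs_of_nonneg (by linarith)]
    linarith
  have hF4 : ¬(θ < |m + za*s - za * σ / Real.sqrt n|) := by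
    rw [not_lt, hzas, add_sub_cancel_right, abs_of_nonneg hm0.le]
    exact hθ
  have habs2 : |m + za*s - za * sigTilde lam σ θ / Real.sqrt n| = m + za*s - rt*s := by
    rw [hcs, abs_of_nonneg (by linarith)]
  have hind2 : ¬(m + za*s < za * sigTilde lam σ θ / Real.sqrt n) := by
    rw [not_lt, hcs]
    linarith
  -- make atoms opaque
  clear_value q w wp Ft Fmt
  -- case split
  by_cases hP : θ ≤ zt * s + za * σ / Real.sqrt n
  · -- CRb(ν₁) branch 2
    have hPs : θ ≤ zt*s + za*s := by rwa [hzas] at hP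
    have hCRb1 : CRb n σ α za θ (zt*s) = w - α/2 := by
      unfold CRb
      rw [if_neg (by rw [not_lt, hzas, abs_le]; constructor <;> linarith),
        if_pos hP, harg,
        show (zt*s - θ)/s = -((θ - zt*s)/s) by ring, Phi_neg, ← hw_def]
      ring
    have hCRb2 : CRb n σ α za θ (m + za*s)
        = 1 - α/2 - Phi ((m + za*s - θ)/s) := by
      unfold CRb
      rw [if_neg hF4, if_pos (by rw [hzas]; linarith), harg]
    by_cases hH2 : θ < |m + za*s - za * sigTilde lam σ θ / Real.sqrt n|
    · -- Region R1
      have hH2' : θ < m + za*s - rt*s := by rwa [habs2] at hH2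
      have hCRa2 : CRa n σ lam za θ (m + za*s) = 0 := by
        unfold CRa
        rw [if_pos hH2, if_neg hind2, mul_zero]
      have hCRa0 : CRa n σ lam za θ m = Ft - q := by
        unfold CRa
        rw [if_neg hF1, if_pos (by rw [hcs]; linarith), hrtσ, hPrt, harg,
          show (m - θ)/s = -((θ - m)/s) by ring, Phi_neg, ← hFt_def]
        ring
      rw [hCRb1, hCRa2, hCRb2, hCRa0]
      rw [show (m + za*s - θ)/s = -((θ - (m + za*s))/s) by ring, Phi_neg]
      rw [show w - α/2 + 0 - (1 - α/2 - (1 - Phi ((θ - (m + za*s))/s)))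
          = w - Phi ((θ - (m + za*s))/s) by ring]
      apply regR1 hA0 hq0 hFt0 hFtw (Phi_nonneg _) _ hqFt hwp0 hwpA hD0ge
      rw [hq_def]
      apply Phi_mono
      rw [div_le_iff₀ hs]
      linarith
    · -- Regions R3 / R4
      have hH2' : m + za*s - rt*s ≤ θ := by
        rw [habs2] at hH2
        linarith [not_lt.1 hH2]
      have hCRa2 : CRa n σ lam za θ (m + za*s)
          = (1 - q) - Phi ((m + za*s - θ)/s) := by
        unfold CRa
        rw [if_neg hH2, if_pos (by rw [hcs]; linarith), hrtσ, hPrt, harg]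
      have hnum : CRb n σ α za θ (zt*s) + CRa n σ lam za θ (m + za*s)
          - CRb n σ α za θ (m + za*s) = w - q := by
        rw [hCRb1, hCRa2, hCRb2]
        ring
      rw [hnum]
      by_cases hH0 : θ ≤ m + za * sigTilde lam σ θ / Real.sqrt n
      · -- R3
        have hCRa0 : CRa n σ lam za θ m = Ft - q := by
          unfold CRa
          rw [if_neg hF1, if_pos hH0, hrtσ, hPrt, harg,
            show (m - θ)/s = -((θ - m)/s) by ring, Phi_neg, ← hFt_def]
          ring
        rw [hCRa0]
        exact regR1 hA0 hq0 hFt0 hFtw hq0.le (le_refl q) hqFt hwp0 hwpA hD0ge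
      · -- R4
        have hCRa0 : CRa n σ lam za θ m = 1 - 2*q := by
          unfold CRa
          rw [if_neg hF1, if_neg hH0, hrtσ, ← hq_def]
        have hH0' : m + rt*s < θ := by
          rw [hcs] at hH0
          exact not_le.1 hH0
        have hFtq : 1 - q ≤ Ft := by
          rw [hFt_def, ← hPrt]
          apply Phi_mono
          rw [le_div_iff₀ hs]
          linarith
        rw [hCRa0]
        exact regR4 hA0 hq0 (by linarith) (by linarith) hFtq hFtw hwp0 hwpA hD0ge
  · -- CRb(ν₁) = 1 - α
    have hPs' : zt*s + za*s < θ := by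
      rw [hzas] at hP
      exact not_le.1 hP
    have hCRb1 : CRb n σ α za θ (zt*s) = 1 - α := by
      unfold CRb
      rw [if_neg (by rw [not_lt, hzas, abs_le]; constructor <;> linarith), if_neg hP]
    by_cases hH3 : θ ≤ m + za*s + za * sigTilde lam σ θ / Real.sqrt n
    · -- Region (i)
      have hH3' : θ ≤ m + za*s + rt*s := by rwa [hcs] at hH3
      have hCRb2 : CRb n σ α za θ (m + za*s)
          = 1 - α/2 - Phi ((m + za*s - θ)/s) := by
        unfold CRb
        rw [if_neg hF4, if_pos (by rw [hzas]; linarith), harg]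
      have hcorr : 1 - α/2 - q ≤ CRb n σ α za θ (zt*s) + CRa n σ lam za θ (m + za*s)
          - CRb n σ α za θ (m + za*s) := by
        rw [hCRb1, hCRb2]
        by_cases hH2 : θ < |m + za*s - za * sigTilde lam σ θ / Real.sqrt n|
        · have hH2' : θ < m + za*s - rt*s := by rwa [habs2] at hH2
          have hCRa2 : CRa n σ lam za θ (m + za*s) = 0 := by
            unfold CRa
            rw [if_pos hH2, if_neg hind2, mul_zero]
          rw [hCRa2]
          have hPatq : 1 - q ≤ Phi ((m + za*s - θ)/s) := by
            rw [← hPrt]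
            apply Phi_mono
            rw [le_div_iff₀ hs]
            linarith
          linarith
        · have hCRa2 : CRa n σ lam za θ (m + za*s)
              = (1 - q) - Phi ((m + za*s - θ)/s) := by
            unfold CRa
            rw [if_neg hH2, if_pos hH3, hrtσ, hPrt, harg]
          rw [hCRa2]
          linarith
      have hCR1 : CRa n σ lam za θ m / (Ft + Fmt) ≤ (1 - 2*q)/(1 - q) := by
        by_cases hH0 : θ ≤ m + za * sigTilde lam σ θ / Real.sqrt n
        · have hCRa0 : CRa n σ lam za θ m = Ft - q := by
            unfold CRa
            rw [if_neg hF1, if_pos hH0, hrtσ, hPrt, harg,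
              show (m - θ)/s = -((θ - m)/s) by ring, Phi_neg, ← hFt_def]
            ring
          rw [hCRa0]
          apply CR1boundB2 hq0 hqFt _ hD0ge
          rw [hFt_def, ← hPrt]
          apply Phi_mono
          rw [hcs] at hH0
          rw [div_le_iff₀ hs]
          linarith
        · have hCRa0 : CRa n σ lam za θ m = 1 - 2*q := by
            unfold CRa
            rw [if_neg hF1, if_neg hH0, hrtσ, ← hq_def]
          rw [hCRa0]
          apply CR1boundB3 (by linarith) (by linarith) _ hD0ge
          rw [hcs] at hH0
          rw [hFt_def, ← hPrt]
          apply Phi_mono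
          rw [le_div_iff₀ hs]
          linarith [not_le.1 hH0]
      exact regI hA0 hA2 hq0 (by linarith) hcorr hD1pos hD1le hCR1
    · -- Regions C / D
      have hH3' : m + za*s + rt*s < θ := by
        rw [hcs] at hH3
        exact not_le.1 hH3
      have hCRa2 : CRa n σ lam za θ (m + za*s) = 1 - 2*q := by
        unfold CRa
        rw [if_neg (by rw [not_lt, habs2]; linarith), if_neg hH3, hrtσ, ← hq_def]
      have hCRa0 : CRa n σ lam za θ m = 1 - 2*q := by
        unfold CRa
        rw [if_neg hF1, if_neg (by rw [not_le, hcs]; linarith), hrtσ, ← hq_def]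
      have hFtza : 1 - α/2 ≤ Ft := by
        rw [hFt_def, ← hza, ← Phi_neg]
        apply Phi_mono
        rw [neg_neg, le_div_iff₀ hs]
        linarith
      rw [hCRa0, hCRb1, hCRa2]
      by_cases hH4 : θ ≤ m + za*s + za * σ / Real.sqrt n
      · -- Region C
        have hCRb2 : CRb n σ α za θ (m + za*s)
            = 1 - α/2 - Phi ((m + za*s - θ)/s) := by
          unfold CRb
          rw [if_neg hF4, if_pos hH4, harg]
        rw [hCRb2]
        rw [show 1 - α + (1 - 2*q) - (1 - α/2 - Phi ((m + za*s - θ)/s))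
            = 1 - α/2 - 2*q + Phi ((m + za*s - θ)/s) by ring]
        apply regCD hA0 hA2 hqA (by linarith) _ hFtza hD0ge hD1pos hD1le
        rw [← hza]
        apply Phi_mono
        rw [hzas] at hH4
        rw [le_div_iff₀ hs]
        linarith
      · -- Region D
        have hCRb2 : CRb n σ α za θ (m + za*s) = 1 - α := by
          unfold CRb
          rw [if_neg hF4, if_neg hH4]
        rw [hCRb2]
        rw [show 1 - α + (1 - 2*q) - (1 - α) = 1 - α/2 - 2*q + α/2 by ring]
        exact regCD hA0 hA2 hqA (by linarith) (le_refl _) hFtza hD0ge hD1pos hD1le
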